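/- If m(x,y) = x·τ(y⁻¹x)⁻¹ on the Heisenberg group with τ(a,b,c) = (a/2, b/2, c/2 + ab/6), and if a₁ = a₂ or b₁ = b₂, then m((a₁,b₁,c₁),(a₂,b₂,c₂)) = ((a₁+a₂)/2, (b₁+b₂)/2, (c₁+c₂)/2), the Euclidean midpoint. -/
import Mathlib


/-- Heisenberg group law on ℝ³: `(a,b,c)·(u,v,s) = (a+u, b+v, c+s+(ub-va)/2)`. -/
noncomputable def Hmul (x y : ℝ × ℝ × ℝ) : ℝ × ℝ × ℝ :=
  (x.1 + y.1, x.2.1 + y.2.1, x.2.2 + y.2.2 + (y.1 * x.2.1 - y.2.1 * x.1) / 2)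

/-- Inverse: `(a,b,c)⁻¹ = (-a,-b,-c)`. -/
def Hinv (x : ℝ × ℝ × ℝ) : ℝ × ℝ × ℝ := (-x.1, -x.2.1, -x.2.2)

/-- Symmetry function on the Heisenberg group. -/
noncomputable def Hτ (x : ℝ × ℝ × ℝ) : ℝ × ℝ × ℝ :=
  (x.1 / 2, x.2.1 / 2, x.2.2 / 2 + x.1 * x.2.1 / 6)

/-- Midpoint function `m(x,y) = x·τ(y⁻¹x)⁻¹`. -/
noncomputable def Hmid (x y : ℝ × ℝ × ℝ) : ℝ × ℝ × ℝ :=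
  Hmul x (Hinv (Hτ (Hmul (Hinv y) x)))

/-- If `a₁ = a₂` or `b₁ = b₂`, the Heisenberg midpoint is the Euclidean midpoint. -/
theorem heisenberg_midpoint_euclidean (a₁ b₁ c₁ a₂ b₂ c₂ : ℝ)
    (h : a₁ = a₂ ∨ b₁ = b₂) :
    Hmid (a₁, b₁, c₁) (a₂, b₂, c₂)
      = ((a₁ + a₂) / 2, (b₁ + b₂) / 2, (c₁ + c₂) / 2) := by
  rcases h with h | h <;> subst h <;> simp [Hmid, Hmul, Hinv, Hτ] <;> constructor <;> ring
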